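/- Every zero of the monic right quaternionic polynomial f_r(z) = zⁿ + z^{n−1} q_n + ⋯ + z q₂ + q₁ is a left eigenvalue of its companion matrix C_{f_r}, and hence satisfies |z| ≤ ‖C_{f_r}‖₂. -/

import Mathlib

open scoped Quaternion
open Finset Matrix

noncomputable def specNorm {n : ℕ} (A : Matrix (Fin n) (Fin n) ℍ[ℝ]) : ℝ :=
  sSup {r : ℝ | ∃ x : Fin n → ℍ[ℝ], x ≠ 0 ∧
    r = Real.sqrt (∑ i, ‖A.mulVec x i‖ ^ 2) / Real.sqrt (∑ i, ‖x i‖ ^ 2)}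

private lemma icc_split (n a : ℕ) (f : ℕ → ℍ[ℝ]) (ha : a ≤ n) :
    ∑ m ∈ Finset.Icc a n, f m = f a + ∑ m ∈ Finset.Icc (a + 1) n, f m := by
  have h : Finset.Icc a n = insert a (Finset.Icc (a + 1) n) := by
    rw [Finset.Icc_add_one_left_eq_Ioc, Finset.Ioc_insert_left ha]
  rw [h, Finset.sum_insert (by simp)]

set_option maxHeartbeats 1600000

theorem zero_is_leftEig_companion (n : ℕ) (hn : 1 ≤ n) (q : ℕ → ℍ[ℝ])
    (C : Matrix (Fin n) (Fin n) ℍ[ℝ])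
    (hC : ∀ i j : Fin n, C i j =
      if (j : ℕ) = n - 1 then -q ((i : ℕ) + 1)
      else if (i : ℕ) = (j : ℕ) + 1 then 1 else 0)
    (z : ℍ[ℝ]) (hz : z ^ n + ∑ i ∈ Finset.Icc 1 n, z ^ (i - 1) * q i = 0) :
    (∃ x : Fin n → ℍ[ℝ], x ≠ 0 ∧ C.mulVec x = fun i => z * x i) ∧
      ‖z‖ ≤ specNorm C := by
  have hn1 : n - 1 < n := Nat.sub_lt hn one_pos
  set x : Fin n → ℍ[ℝ] := fun i =>
    z ^ (n - 1 - (i : ℕ)) + ∑ m ∈ Finset.Icc ((i : ℕ) + 2) n, z ^ (m - (i : ℕ) - 2) * q m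
    with hxdef
  have hxlast : x ⟨n - 1, hn1⟩ = 1 := by
    simp only [hxdef]
    rw [Finset.Icc_eq_empty (by omega)]
    simp
  have hx0 : x ≠ 0 := by
    intro h
    have := congrFun h ⟨n - 1, hn1⟩
    rw [hxlast] at this
    simp at this
  -- the key linear-algebra computation
  have hmulvec : C.mulVec x = fun i => z * x i := by
    funext i
    show ∑ j, C i j * x j = z * x i
    rcases Nat.eq_zero_or_pos (i : ℕ) with h0 | hpos
    · -- first row
      rw [Finset.sum_eq_single_of_mem ⟨n - 1, hn1⟩ (Finset.mem_univ _)
        (by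
          intro j _ hj
          rw [hC]
          have hjv : (j : ℕ) ≠ n - 1 := fun h => hj (Fin.ext h)
          rw [if_neg hjv, if_neg (by omega), zero_mul])]
      rw [hC, if_pos rfl, hxlast, mul_one]
      -- -q (i+1) = z * x i  with (i:ℕ) = 0
      have hxi : x i = z ^ (n - 1) + ∑ m ∈ Finset.Icc 2 n, z ^ (m - 2) * q m := by
        simp only [hxdef, h0]
        norm_num
      rw [h0, hxi, mul_add, Finset.mul_sum]
      have h1 : z * z ^ (n - 1) = z ^ n := by
        rw [← pow_succ']
        congr 1
        omega
      have h2 : ∀ m ∈ Finset.Icc 2 n, z * (z ^ (m - 2) * q m) = z ^ (m - 1) * q m := by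
        intro m hm
        have hm' := Finset.mem_Icc.mp hm
        rw [← mul_assoc, ← pow_succ']
        congr 2
        omega
      rw [Finset.sum_congr rfl h2, h1]
      -- now use hz
      rw [icc_split n 1 _ hn] at hz
      simp only [Nat.sub_self, pow_zero, one_mul] at hz
      have : (1 : ℕ) + 1 = 2 := rfl
      rw [this] at hz
      linear_combination (norm := noncomm_ring) -hz
    · -- rows with (i:ℕ) ≥ 1, so n ≥ 2
      have hin : (i : ℕ) < n := i.isLt
      have hi1 : (i : ℕ) - 1 < n := by omega
      rw [Finset.sum_eq_add_of_mem ⟨n - 1, hn1⟩ ⟨(i : ℕ) - 1, hi1⟩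
        (Finset.mem_univ _) (Finset.mem_univ _)
        (by
          intro h
          rw [Fin.mk.injEq] at h
          omega)
        (by
          intro c _ hc
          obtain ⟨hc1, hc2⟩ := hc
          rw [hC]
          have h1 : (c : ℕ) ≠ n - 1 := fun h => hc1 (Fin.ext h)
          have h2 : (i : ℕ) ≠ (c : ℕ) + 1 := by
            intro h
            exact hc2 (Fin.ext (by simp only [Fin.val_mk]; omega))
          rw [if_neg h1, if_neg h2, zero_mul])]
      rw [hC, hC, if_pos rfl, hxlast, mul_one]
      have h1 : ¬ ((⟨(i : ℕ) - 1, hi1⟩ : Fin n) : ℕ) = n - 1 := by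
        simp only [Fin.val_mk]
        omega
      rw [if_neg h1, if_pos (by simp; omega), one_mul]
      -- -q (i+1) + x ⟨i-1⟩ = z * x i
      have hxm : x ⟨(i : ℕ) - 1, hi1⟩ =
          z ^ (n - (i : ℕ)) + (q ((i : ℕ) + 1) +
            ∑ m ∈ Finset.Icc ((i : ℕ) + 2) n, z ^ (m - (i : ℕ) - 1) * q m) := by
        simp only [hxdef]
        have he : (i : ℕ) - 1 + 2 = (i : ℕ) + 1 := by omega
        rw [he, icc_split n ((i : ℕ) + 1) _ (by omega)]
        have h3 : (i : ℕ) + 1 - ((i : ℕ) - 1) - 2 = 0 := by omega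
        rw [h3, pow_zero, one_mul]
        congr 1
        · congr 1; omega
        · congr 1
          apply Finset.sum_congr rfl
          intro m hm
          have hm' := Finset.mem_Icc.mp hm
          congr 2
          omega
      have hxi : z * x i = z ^ (n - (i : ℕ)) +
          ∑ m ∈ Finset.Icc ((i : ℕ) + 2) n, z ^ (m - (i : ℕ) - 1) * q m := by
        simp only [hxdef]
        rw [mul_add, Finset.mul_sum]
        congr 1
        · rw [← pow_succ']; congr 1; omega
        · apply Finset.sum_congr rfl
          intro m hm
          have hm' := Finset.mem_Icc.mp hm
          rw [← mul_assoc, ← pow_succ']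
          congr 2
          omega
      rw [hxm, hxi]
      abel
  refine ⟨⟨x, hx0, hmulvec⟩, ?_⟩
  -- norm bound
  have hT : (1 : ℝ) ≤ ∑ i, ‖x i‖ ^ 2 := by
    calc (1 : ℝ) = ‖x ⟨n - 1, hn1⟩‖ ^ 2 := by rw [hxlast]; simp
      _ ≤ _ := Finset.single_le_sum (f := fun i : Fin n => ‖x i‖ ^ 2)
          (fun i _ => sq_nonneg _) (Finset.mem_univ _)
  have hTpos : (0 : ℝ) < ∑ i, ‖x i‖ ^ 2 := lt_of_lt_of_le one_pos hT
  have hmem : ‖z‖ ∈ {r : ℝ | ∃ y : Fin n → ℍ[ℝ], y ≠ 0 ∧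
      r = Real.sqrt (∑ i, ‖C.mulVec y i‖ ^ 2) / Real.sqrt (∑ i, ‖y i‖ ^ 2)} := by
    refine ⟨x, hx0, ?_⟩
    rw [hmulvec]
    have h1 : ∑ i, ‖(fun i => z * x i) i‖ ^ 2 = ‖z‖ ^ 2 * ∑ i, ‖x i‖ ^ 2 := by
      rw [Finset.mul_sum]
      apply Finset.sum_congr rfl
      intro i _
      rw [norm_mul, mul_pow]
    rw [h1, Real.sqrt_mul (sq_nonneg _), Real.sqrt_sq (norm_nonneg _)]
    rw [mul_div_assoc, div_self (by positivity), mul_one]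
  have hbdd : BddAbove {r : ℝ | ∃ y : Fin n → ℍ[ℝ], y ≠ 0 ∧
      r = Real.sqrt (∑ i, ‖C.mulVec y i‖ ^ 2) / Real.sqrt (∑ i, ‖y i‖ ^ 2)} := by
    refine ⟨Real.sqrt (∑ i, ∑ j, ‖C i j‖ ^ 2), ?_⟩
    rintro r ⟨y, hy, rfl⟩
    have hS : (0 : ℝ) < ∑ i, ‖y i‖ ^ 2 := by
      obtain ⟨i0, hi0⟩ := Function.ne_iff.mp hy
      refine Finset.sum_pos' (fun i _ => sq_nonneg _) ⟨i0, Finset.mem_univ _, ?_⟩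
      exact pow_pos (norm_pos_iff.mpr hi0) 2
    have hrow : ∀ i, ‖C.mulVec y i‖ ^ 2 ≤ (∑ j, ‖C i j‖ ^ 2) * ∑ j, ‖y j‖ ^ 2 := by
      intro i
      have h1 : ‖C.mulVec y i‖ ≤ ∑ j, ‖C i j‖ * ‖y j‖ := by
        rw [Matrix.mulVec, dotProduct]
        refine le_trans (norm_sum_le _ _) (le_of_eq ?_)
        exact Finset.sum_congr rfl fun j _ => norm_mul _ _
      calc ‖C.mulVec y i‖ ^ 2 ≤ (∑ j, ‖C i j‖ * ‖y j‖) ^ 2 :=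
            pow_le_pow_left₀ (norm_nonneg _) h1 2
        _ ≤ _ := Finset.sum_mul_sq_le_sq_mul_sq _ _ _
    have hsum : ∑ i, ‖C.mulVec y i‖ ^ 2 ≤ (∑ i, ∑ j, ‖C i j‖ ^ 2) * ∑ j, ‖y j‖ ^ 2 := by
      rw [Finset.sum_mul]
      exact Finset.sum_le_sum fun i _ => hrow i
    rw [div_le_iff₀ (Real.sqrt_pos.mpr hS)]
    calc Real.sqrt (∑ i, ‖C.mulVec y i‖ ^ 2)
        ≤ Real.sqrt ((∑ i, ∑ j, ‖C i j‖ ^ 2) * ∑ j, ‖y j‖ ^ 2) := Real.sqrt_le_sqrt hsum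
      _ = _ := Real.sqrt_mul (Finset.sum_nonneg fun i _ =>
          Finset.sum_nonneg fun j _ => sq_nonneg _) _
  exact le_csSup hbdd hmem
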